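/- Let ε ∈ (0, 1/2) and let r ≥ 3 be an integer. There exists a constant c = c(ε, r) > 0 such that if p = p(n) ≤ c n^{-2/r}, then with high probability G_r(n,p) does NOT contain any K_r-tiling that covers all but at most εn vertices in each vertex class. -/

import Mathlib

open MeasureTheory Filter Finset
open scoped Classical

abbrev MV (r n : ℕ) := Fin r × Fin n

noncomputable def bernoulliMeasure (p : ℝ) : Measure Bool :=
  ENNReal.ofReal p • Measure.dirac true + ENNReal.ofReal (1 - p) • Measure.dirac false

noncomputable def grpMeasure (r n : ℕ) (p : ℝ) :
    Measure (Sym2 (MV r n) → Bool) :=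
  Measure.pi fun _ => bernoulliMeasure p

def sampleGraph (r n : ℕ) (ω : Sym2 (MV r n) → Bool) : SimpleGraph (MV r n) where
  Adj u v := u.1 ≠ v.1 ∧ ω s(u, v) = true
  symm := ⟨fun u v h => ⟨h.1.symm, by rw [Sym2.eq_swap]; exact h.2⟩⟩
  loopless := ⟨fun u h => h.1 rfl⟩

def sampleGraphTail (r n : ℕ) (ω : Sym2 (MV r n) → Bool) : SimpleGraph (MV r n) where
  Adj u v := u.1 ≠ v.1 ∧ u.1.val ≠ 0 ∧ v.1.val ≠ 0 ∧ ω s(u, v) = true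
  symm := ⟨fun u v h => ⟨h.1.symm, h.2.2.1, h.2.1, by rw [Sym2.eq_swap]; exact h.2.2.2⟩⟩
  loopless := ⟨fun u h => h.1 rfl⟩

def IsMultipartite (r n : ℕ) (G : SimpleGraph (MV r n)) : Prop :=
  ∀ u v, G.Adj u v → u.1 ≠ v.1

noncomputable def classFinset (r n : ℕ) (i : ℕ) : Finset (MV r n) :=
  Finset.univ.filter (fun v => v.1.val = i)

noncomputable def degIn (r n : ℕ) (G : SimpleGraph (MV r n)) (v : MV r n) (j : Fin r) : ℕ :=
  Set.ncard {u : MV r n | u.1 = j ∧ G.Adj v u}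

def MinDegCond (r n : ℕ) (G : SimpleGraph (MV r n)) (a : ℝ) : Prop :=
  ∀ v : MV r n, ∀ j : Fin r, j ≠ v.1 → a ≤ (degIn r n G v j : ℝ)

def IsKrTiling {W : Type*} (G : SimpleGraph W) (r : ℕ) (T : Finset (Finset W)) : Prop :=
  (∀ t ∈ T, t.card = r ∧ G.IsClique (t : Set W)) ∧
  (T : Set (Finset W)).PairwiseDisjoint id

def HasPerfectKrTiling {W : Type*} (G : SimpleGraph W) (r : ℕ) : Prop :=
  ∃ T : Finset (Finset W), IsKrTiling G r T ∧ ∀ v : W, ∃ t ∈ T, v ∈ t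

noncomputable def relDensity {A B : Type*} (R : A → B → Prop) (s : Finset A) (t : Finset B) : ℝ :=
  (Set.ncard {p : A × B | p.1 ∈ s ∧ p.2 ∈ t ∧ R p.1 p.2} : ℝ) / ((s.card : ℝ) * (t.card : ℝ))

def IsRegularPairR {A B : Type*} (R : A → B → Prop) (ε : ℝ) (s : Finset A) (t : Finset B) : Prop :=
  ∀ X ⊆ s, ∀ Y ⊆ t, ε * s.card ≤ X.card → ε * t.card ≤ Y.card →
    |relDensity R s t - relDensity R X Y| < ε

def IsSuperRegularR {A B : Type*} (R : A → B → Prop) (ε d : ℝ) (s : Finset A) (t : Finset B) : Prop :=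
  (∀ X ⊆ s, ∀ Y ⊆ t, ε * s.card ≤ X.card → ε * t.card ≤ Y.card → d < relDensity R X Y) ∧
  (∀ a ∈ s, d * t.card < (Set.ncard {b | b ∈ t ∧ R a b} : ℝ)) ∧
  (∀ b ∈ t, d * s.card < (Set.ncard {a | a ∈ s ∧ R a b} : ℝ))

def IsTupleF (r n : ℕ) (G : SimpleGraph (MV r n)) (d : ℝ)
    (g : {k : Fin r // k.val ≠ 0} → MV r n) : Prop :=
  (∀ k, (g k).1 = k.1) ∧
  ((d/2)^(r-1) * n ≤ (Set.ncard {u : MV r n | u.1.val = 0 ∧ ∀ k, G.Adj u (g k)} : ℝ))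

/-- A `K_r`-tiling of `G` covering all but at most `ε * n` vertices in each vertex class. -/
def KrTilingCovers (r n : ℕ) (G : SimpleGraph (MV r n)) (ε : ℝ) : Prop :=
  ∃ T : Finset (Finset (MV r n)), IsKrTiling G r T ∧
    ∀ i : Fin r,
      (Set.ncard {v : MV r n | v.1 = i ∧ ∀ t ∈ T, v ∉ t} : ℝ) ≤ ε * n


/-! ### Auxiliary lemmas for `statement3` -/

section Statement3Aux

instance bern_fin (p : ℝ) : IsFiniteMeasure (bernoulliMeasure p) := by
  constructor
  simp only [bernoulliMeasure, Measure.add_apply, Measure.smul_apply, smul_eq_mul,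
    measure_univ, mul_one]
  exact ENNReal.add_lt_top.2 ⟨ENNReal.ofReal_lt_top, ENNReal.ofReal_lt_top⟩

lemma bern_true (p : ℝ) : bernoulliMeasure p {true} = ENNReal.ofReal p := by
  simp [bernoulliMeasure, Measure.dirac_apply]

lemma bern_univ (p : ℝ) (h0 : 0 ≤ p) (h1 : p ≤ 1) : bernoulliMeasure p Set.univ = 1 := by
  simp only [bernoulliMeasure, Measure.add_apply, Measure.smul_apply, smul_eq_mul,
    measure_univ, mul_one]
  rw [← ENNReal.ofReal_add h0 (by linarith)]
  norm_num

lemma grp_univ (r n : ℕ) (p : ℝ) (h0 : 0 ≤ p) (h1 : p ≤ 1) :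
    grpMeasure r n p Set.univ = 1 := by
  rw [grpMeasure, Measure.pi_univ, bern_univ p h0 h1]
  simp

lemma measure_allTrue (r n : ℕ) (p : ℝ) (h0 : 0 ≤ p) (h1 : p ≤ 1)
    (F : Finset (Sym2 (MV r n))) :
    grpMeasure r n p {ω | ∀ e ∈ F, ω e = true} = (ENNReal.ofReal p) ^ F.card := by
  have hset : {ω : Sym2 (MV r n) → Bool | ∀ e ∈ F, ω e = true}
      = Set.univ.pi (fun e => if e ∈ F then ({true} : Set Bool) else Set.univ) := by
    ext ω
    simp only [Set.mem_setOf_eq, Set.mem_pi, Set.mem_univ, forall_true_left]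
    constructor
    · intro h e
      by_cases he : e ∈ F <;> simp [he, h e]
    · intro h e he
      have := h e
      simp [he] at this
      exact this
  rw [hset, grpMeasure, Measure.pi_pi]
  have : ∀ e : Sym2 (MV r n),
      bernoulliMeasure p (if e ∈ F then ({true} : Set Bool) else Set.univ)
        = if e ∈ F then ENNReal.ofReal p else 1 := by
    intro e; split_ifs with he
    · exact bern_true p
    · exact bern_univ p h0 h1
  rw [Finset.prod_congr rfl (fun e _ => this e)]
  rw [Finset.prod_ite_mem Finset.univ F (fun _ => ENNReal.ofReal p), Finset.univ_inter,
    Finset.prod_const]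

noncomputable def tileVert (r n : ℕ) (S : Finset (Fin n)) (hS : S.card = (n+1)/2)
    (g : Fin ((n+1)/2) → ({k : Fin r // k.val ≠ 0} → Fin n))
    (i : Fin ((n+1)/2)) (k : Fin r) : MV r n :=
  (k, if hk : k.val = 0 then S.orderEmbOfFin hS i else g i ⟨k, hk⟩)

noncomputable def badE (r n : ℕ)
    (Sg : Finset (Fin n) × (Fin ((n+1)/2) → ({k : Fin r // k.val ≠ 0} → Fin n))) :
    Set (Sym2 (MV r n) → Bool) :=
  if hS : Sg.1.card = (n+1)/2 then
    if Function.Injective (fun ik : Fin ((n+1)/2) × Fin r =>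
        tileVert r n Sg.1 hS Sg.2 ik.1 ik.2) then
      {ω | ∀ i k l, k ≠ l →
        ω s(tileVert r n Sg.1 hS Sg.2 i k, tileVert r n Sg.1 hS Sg.2 i l) = true}
    else ∅
  else ∅

lemma phi_inj (r n : ℕ) (S : Finset (Fin n)) (hS : S.card = (n+1)/2)
    (g : Fin ((n+1)/2) → ({k : Fin r // k.val ≠ 0} → Fin n))
    (hinj : Function.Injective (fun ik : Fin ((n+1)/2) × Fin r =>
        tileVert r n S hS g ik.1 ik.2)) :
    Function.Injective (fun x : Fin ((n+1)/2) × {e : Sym2 (Fin r) // ¬ e.IsDiag} =>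
      Sym2.map (tileVert r n S hS g x.1) x.2.val) := by
  rintro ⟨i, e, he⟩ ⟨i', e', he'⟩ h
  induction e using Sym2.ind with | _ a b =>
  induction e' using Sym2.ind with | _ a' b' =>
  simp only [Sym2.map_pair_eq, Sym2.eq_iff] at h
  simp only [Sym2.mk_isDiag_iff] at he he'
  rcases h with ⟨h1, h2⟩ | ⟨h1, h2⟩
  · have e1 := hinj (a₁ := (i, a)) (a₂ := (i', a')) h1
    have e2 := hinj (a₁ := (i, b)) (a₂ := (i', b')) h2
    simp only [Prod.mk.injEq] at e1 e2 ⊢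
    exact ⟨e1.1, by simp [Subtype.ext_iff, e1.2, e2.2]⟩
  · have e1 := hinj (a₁ := (i, a)) (a₂ := (i', b')) h1
    have e2 := hinj (a₁ := (i, b)) (a₂ := (i', a')) h2
    simp only [Prod.mk.injEq] at e1 e2 ⊢
    refine ⟨e1.1, ?_⟩
    simp only [Subtype.ext_iff, e1.2, e2.2, Sym2.eq_swap]

lemma badE_measure (r n : ℕ) (p : ℝ) (h0 : 0 ≤ p) (h1 : p ≤ 1)
    (Sg : Finset (Fin n) × (Fin ((n+1)/2) → ({k : Fin r // k.val ≠ 0} → Fin n))) :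
    grpMeasure r n p (badE r n Sg)
      ≤ (ENNReal.ofReal p) ^ ((n+1)/2 * r.choose 2) := by
  rw [badE]
  split_ifs with hS hinj
  · set v := tileVert r n Sg.1 hS Sg.2 with hv
    set φ : Fin ((n+1)/2) × {e : Sym2 (Fin r) // ¬ e.IsDiag} → Sym2 (MV r n) :=
      fun x => Sym2.map (v x.1) x.2.val with hφ
    have hφinj : Function.Injective φ := phi_inj r n Sg.1 hS Sg.2 hinj
    set F : Finset (Sym2 (MV r n)) := Finset.image φ Finset.univ with hF
    have hsets : {ω : Sym2 (MV r n) → Bool | ∀ i k l, k ≠ l → ω s(v i k, v i l) = true}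
        = {ω | ∀ e ∈ F, ω e = true} := by
      ext ω
      simp only [Set.mem_setOf_eq]
      constructor
      · intro h e heF
        rw [hF, Finset.mem_image] at heF
        obtain ⟨⟨i, q⟩, -, rfl⟩ := heF
        obtain ⟨q, hq⟩ := q
        induction q using Sym2.ind with | _ k l =>
        simp only [Sym2.mk_isDiag_iff] at hq
        simpa only [hφ, Sym2.map_pair_eq] using h i k l hq
      · intro h i k l hkl
        have : s(v i k, v i l) ∈ F := by
          rw [hF, Finset.mem_image]
          exact ⟨(i, ⟨s(k, l), by simpa [Sym2.mk_isDiag_iff] using hkl⟩),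
            Finset.mem_univ _, by simp [hφ, Sym2.map_pair_eq]⟩
        exact h _ this
    rw [hsets, measure_allTrue r n p h0 h1 F]
    have hcard : F.card = (n+1)/2 * r.choose 2 := by
      rw [hF, Finset.card_image_of_injective _ hφinj, Finset.card_univ,
        Fintype.card_prod, Fintype.card_fin, Sym2.card_subtype_not_diag,
        Fintype.card_fin]
    rw [hcard]
  · simp
  · simp

lemma covers_mem_badE (r n : ℕ) (hr : 3 ≤ r) (hn : 1 ≤ n) (ε : ℝ) (hε1 : ε < 1/2)
    (ω : Sym2 (MV r n) → Bool) (h : KrTilingCovers r n (sampleGraph r n ω) ε) :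
    ∃ Sg, ω ∈ badE r n Sg := by
  haveI : NeZero r := ⟨by omega⟩
  obtain ⟨T, ⟨hT1, hT2⟩, hT3⟩ := h
  have hfst : ∀ t ∈ T, ∀ u ∈ t, ∀ v ∈ t, u.1 = v.1 → u = v := by
    intro t ht u hu v hv huv
    by_contra hne
    exact (And.left ((hT1 t ht).2 (Finset.mem_coe.2 hu) (Finset.mem_coe.2 hv) hne)) huv
  have hexists : ∀ t ∈ T, ∀ k : Fin r, ∃ v ∈ t, v.1 = k := by
    intro t ht k
    have himg : Finset.image Prod.fst t = (Finset.univ : Finset (Fin r)) := by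
      apply Finset.eq_univ_of_card
      rw [Finset.card_image_of_injOn (fun u hu v hv h => hfst t ht u hu v hv h)]
      rw [(hT1 t ht).1, Fintype.card_fin]
    have : k ∈ Finset.image Prod.fst t := by rw [himg]; exact Finset.mem_univ k
    simpa [Finset.mem_image] using this
  set C : Finset (Fin n) := Finset.univ.filter (fun s => ∃ t ∈ T, ((0 : Fin r), s) ∈ t)
    with hC
  have hCcard : (n+1)/2 ≤ C.card := by
    have hunc := hT3 0
    set U : Finset (MV r n) := Finset.univ.filter (fun v => v.1 = 0 ∧ ∀ t ∈ T, v ∉ t)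
      with hU
    have hncard : {v : MV r n | v.1 = 0 ∧ ∀ t ∈ T, v ∉ t} = ↑U := by
      ext v; simp [hU]
    rw [hncard, Set.ncard_coe_finset] at hunc
    have hinj : (Finset.univ.filter
        (fun s : Fin n => ¬ ∃ t ∈ T, ((0 : Fin r), s) ∈ t)).card ≤ U.card := by
      apply Finset.card_le_card_of_injOn (fun s => ((0 : Fin r), s))
      · intro s hs
        simp only [Finset.mem_coe, Finset.mem_filter, Finset.mem_univ, true_and, not_exists] at hs
        rw [hU]
        simp only [Finset.mem_coe, Finset.mem_filter, Finset.mem_univ, true_and]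
        intro t ht hmem
        exact absurd hmem (by tauto)
      · intro a _ b _ hab
        simpa using congrArg Prod.snd hab
    have hsplit := Finset.card_filter_add_card_filter_not
      (s := (Finset.univ : Finset (Fin n)))
      (p := fun s => ∃ t ∈ T, ((0 : Fin r), s) ∈ t)
    have hcu : (Finset.univ : Finset (Fin n)).card = n := by simp
    rw [hcu, ← hC] at hsplit
    have hUn : 2 * U.card < n := by
      have h1 : (U.card : ℝ) < (n : ℝ) / 2 := by
        refine lt_of_le_of_lt hunc ?_
        have : (0 : ℝ) < n := by exact_mod_cast hn
        nlinarith
      have : (2 * U.card : ℝ) < n := by linarith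
      exact_mod_cast this
    omega
  obtain ⟨S, hSC, hScard⟩ := Finset.exists_subset_card_eq hCcard
  have hmemC : ∀ i : Fin ((n+1)/2),
      ∃ t ∈ T, ((0 : Fin r), S.orderEmbOfFin hScard i) ∈ t := by
    intro i
    have := hSC (S.orderEmbOfFin_mem hScard i)
    rw [hC] at this
    simpa using this
  choose tile htileT htilemem using hmemC
  have hex2 : ∀ (i : Fin ((n+1)/2)) (k : {k : Fin r // k.val ≠ 0}),
      ∃ v ∈ tile i, v.1 = k.1 := fun i k => hexists (tile i) (htileT i) k.1
  choose w hw1 hw2 using hex2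
  set g : Fin ((n+1)/2) → {k : Fin r // k.val ≠ 0} → Fin n :=
    fun i k => (w i k).2 with hg
  have hvmem : ∀ i k, tileVert r n S hScard g i k ∈ tile i := by
    intro i k
    rw [tileVert]
    split_ifs with hk
    · have hk0 : k = 0 := Fin.ext hk
      rw [hk0]
      exact htilemem i
    · have hv2 := hw2 i ⟨k, hk⟩
      have : (k, g i ⟨k, hk⟩) = w i ⟨k, hk⟩ := by
        rw [hg]; exact Prod.ext hv2.symm rfl
      rw [this]
      exact hw1 i ⟨k, hk⟩
  have hvfst : ∀ i k, (tileVert r n S hScard g i k).1 = k := fun i k => rfl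
  have hinj : Function.Injective (fun ik : Fin ((n+1)/2) × Fin r =>
      tileVert r n S hScard g ik.1 ik.2) := by
    rintro ⟨i, k⟩ ⟨i', k'⟩ hik
    simp only at hik
    have hkk : k = k' := by
      have := congrArg Prod.fst hik
      rwa [hvfst, hvfst] at this
    subst hkk
    have hmem1 : tileVert r n S hScard g i k ∈ tile i := hvmem i k
    have hmem2 : tileVert r n S hScard g i k ∈ tile i' := hik ▸ hvmem i' k
    have hti : tile i = tile i' := by
      by_contra hne
      exact Finset.disjoint_left.1
        (hT2 (Finset.mem_coe.2 (htileT i)) (Finset.mem_coe.2 (htileT i')) hne)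
        hmem1 hmem2
    have hzero : ((0 : Fin r), S.orderEmbOfFin hScard i)
        = ((0 : Fin r), S.orderEmbOfFin hScard i') := by
      exact hfst (tile i) (htileT i) ((0 : Fin r), S.orderEmbOfFin hScard i)
        (htilemem i) ((0 : Fin r), S.orderEmbOfFin hScard i')
        (by rw [hti]; exact htilemem i') rfl
    have hii : i = i' := by
      have := congrArg Prod.snd hzero
      exact (S.orderEmbOfFin hScard).injective this
    rw [hii]
  refine ⟨(S, g), ?_⟩
  rw [badE, dif_pos hScard, if_pos hinj]
  intro i k l hkl
  have hne : tileVert r n S hScard g i k ≠ tileVert r n S hScard g i l := by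
    intro hc
    exact hkl (by rw [← hvfst i k, ← hvfst i l, hc])
  have hadj := (hT1 (tile i) (htileT i)).2
    (Finset.mem_coe.2 (hvmem i k)) (Finset.mem_coe.2 (hvmem i l)) hne
  exact And.right hadj

lemma two_choose (r : ℕ) (hr : 3 ≤ r) : 2 * r.choose 2 = r * (r - 1) := by
  rw [Nat.choose_two_right]
  refine Nat.mul_div_cancel' ?_
  have h : r * (r - 1) = (r - 1) * ((r - 1) + 1) := by
    have : r - 1 + 1 = r := by omega
    rw [this]; ring
  rw [h]
  exact (Nat.even_mul_succ_self (r - 1)).two_dvd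

lemma real_bound (r n : ℕ) (hr : 3 ≤ r) (hn : 1 ≤ n) (p : ℝ) (h0 : 0 ≤ p)
    (hp : p ≤ (1/16) * (n : ℝ) ^ (-(2 : ℝ)/r)) :
    ((2^n * (n^(r-1))^((n+1)/2) : ℕ) : ℝ) * p ^ ((n+1)/2 * r.choose 2)
      ≤ (1/2 : ℝ)^n := by
  set m := (n+1)/2 with hm
  set K := r.choose 2 with hKdef
  have h2K : 2 * K = r * (r - 1) := two_choose r hr
  have hK3 : 3 ≤ K := by
    have h6 : 3 * 2 ≤ r * (r - 1) := Nat.mul_le_mul hr (by omega)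
    omega
  have hmn : n ≤ m * K := by
    have h2m : n ≤ m * 2 := by omega
    exact h2m.trans (Nat.mul_le_mul_left m (by omega))
  have hn0 : (0 : ℝ) < n := by exact_mod_cast hn
  have hr0 : (0 : ℝ) < r := by positivity
  have hx : (0 : ℝ) ≤ (n : ℝ) ^ (-(2 : ℝ)/r) := Real.rpow_nonneg hn0.le _
  have step1 : p ^ (m * K) ≤ (1/16 : ℝ) ^ (m * K) * ((n : ℝ) ^ (-(2 : ℝ)/r)) ^ (m * K) := by
    rw [← mul_pow]
    exact pow_le_pow_left₀ h0 hp _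
  have step2 : ((n : ℝ) ^ (r-1)) ^ m * ((n : ℝ) ^ (-(2 : ℝ)/r)) ^ (m * K) = 1 := by
    rw [← pow_mul]
    rw [← Real.rpow_natCast (n : ℝ) ((r-1) * m),
      ← Real.rpow_natCast ((n : ℝ) ^ (-(2 : ℝ)/r)) (m * K),
      ← Real.rpow_mul hn0.le, ← Real.rpow_add hn0]
    rw [show (((r-1) * m : ℕ) : ℝ) + (-(2 : ℝ)/r) * ((m * K : ℕ) : ℝ) = 0 from ?_,
      Real.rpow_zero]
    have hcast : 2 * (K : ℝ) = (r : ℝ) * ((r : ℝ) - 1) := by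
      have := h2K
      have h1 : ((r - 1 : ℕ) : ℝ) = (r : ℝ) - 1 := by
        rw [Nat.cast_sub (by omega)]; norm_num
      rw [← h1]; exact_mod_cast this
    push_cast [Nat.cast_sub (show 1 ≤ r by omega)]
    field_simp
    linear_combination (-(m : ℝ)) * hcast
  have hNcast : ((2^n * (n^(r-1))^m : ℕ) : ℝ) = 2^n * ((n:ℝ)^(r-1))^m := by push_cast; ring
  rw [hNcast]
  calc 2^n * ((n:ℝ)^(r-1))^m * p ^ (m * K)
      ≤ 2^n * ((n:ℝ)^(r-1))^m * ((1/16 : ℝ) ^ (m * K) * ((n : ℝ) ^ (-(2 : ℝ)/r)) ^ (m * K)) := by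
        refine mul_le_mul_of_nonneg_left step1 (by positivity)
    _ = 2^n * (1/16 : ℝ) ^ (m * K) * (((n:ℝ)^(r-1))^m * ((n : ℝ) ^ (-(2 : ℝ)/r)) ^ (m * K)) := by
        ring
    _ = 2^n * (1/16 : ℝ) ^ (m * K) := by rw [step2, mul_one]
    _ ≤ 2^n * (1/16 : ℝ) ^ n := by
        refine mul_le_mul_of_nonneg_left ?_ (by positivity)
        exact pow_le_pow_of_le_one (by norm_num) (by norm_num) hmn
    _ = (1/8 : ℝ)^n := by rw [← mul_pow]; norm_num
    _ ≤ (1/2 : ℝ)^n := pow_le_pow_left₀ (by norm_num) (by norm_num) n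

lemma card_index (r n : ℕ) (hr : 3 ≤ r) :
    Fintype.card (Finset (Fin n) × (Fin ((n+1)/2) → ({k : Fin r // k.val ≠ 0} → Fin n)))
      = 2^n * (n^(r-1))^((n+1)/2) := by
  haveI : NeZero r := ⟨by omega⟩
  have hsub : Fintype.card {k : Fin r // k.val ≠ 0} = r - 1 := by
    have h1 : Fintype.card {k : Fin r // k.val = 0} = 1 := by
      have hfilter : (Finset.univ.filter (fun k : Fin r => k.val = 0)) = {0} := by
        ext k; simp only [Finset.mem_filter, Finset.mem_univ, true_and, Finset.mem_singleton, Fin.val_eq_zero_iff]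
      rw [Fintype.card_subtype, hfilter, Finset.card_singleton]
    have := Fintype.card_subtype_compl (fun k : Fin r => k.val = 0)
    rw [h1, Fintype.card_fin] at this
    exact this
  rw [Fintype.card_prod, Fintype.card_finset, Fintype.card_fin,
    Fintype.card_fun, Fintype.card_fun, Fintype.card_fin, Fintype.card_fin, hsub]

lemma covers_measure_le (r n : ℕ) (hr : 3 ≤ r) (hn : 1 ≤ n) (ε : ℝ) (hε1 : ε < 1/2)
    (p : ℝ) (h0 : 0 ≤ p) (h1 : p ≤ 1) (hp : p ≤ (1/16) * (n : ℝ) ^ (-(2 : ℝ)/r)) :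
    grpMeasure r n p {ω | KrTilingCovers r n (sampleGraph r n ω) ε}
      ≤ ENNReal.ofReal ((1/2 : ℝ)^n) := by
  classical
  calc grpMeasure r n p {ω | KrTilingCovers r n (sampleGraph r n ω) ε}
      ≤ grpMeasure r n p (⋃ Sg, badE r n Sg) := by
        refine measure_mono ?_
        intro ω hω
        exact Set.mem_iUnion.2 (covers_mem_badE r n hr hn ε hε1 ω hω)
    _ ≤ ∑' Sg, grpMeasure r n p (badE r n Sg) := measure_iUnion_le _
    _ = ∑ Sg, grpMeasure r n p (badE r n Sg) := tsum_fintype _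
    _ ≤ (Finset.univ.card : ℕ) • ((ENNReal.ofReal p) ^ ((n+1)/2 * r.choose 2)) :=
        Finset.sum_le_card_nsmul Finset.univ _ _
          (fun Sg _ => badE_measure r n p h0 h1 Sg)
    _ ≤ ENNReal.ofReal ((1/2 : ℝ)^n) := by
        rw [Finset.card_univ, card_index r n hr, nsmul_eq_mul]
        rw [← ENNReal.ofReal_natCast, ← ENNReal.ofReal_pow h0, ← ENNReal.ofReal_mul
          (by positivity)]
        exact ENNReal.ofReal_le_ofReal (real_bound r n hr hn p h0 hp)

end Statement3Aux

theorem statement3 (ε : ℝ) (hε0 : 0 < ε) (hε1 : ε < 1 / 2) (r : ℕ) (hr : 3 ≤ r) :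
    ∃ c : ℝ, 0 < c ∧
      ∀ p : ℕ → ℝ, (∀ n, 0 ≤ p n) → (∀ n, p n ≤ 1) →
        (∀ n : ℕ, p n ≤ c * (n : ℝ) ^ (-(2 : ℝ) / r)) →
        Tendsto (fun n => grpMeasure r n (p n)
            {ω | ¬ KrTilingCovers r n (sampleGraph r n ω) ε})
          atTop (nhds 1) := by
  refine ⟨1/16, by norm_num, ?_⟩
  intro p hp0 hp1 hpc
  have hbound : ∀ n : ℕ, 1 ≤ n →
      1 - ENNReal.ofReal ((1/2 : ℝ)^n)
        ≤ grpMeasure r n (p n) {ω | ¬ KrTilingCovers r n (sampleGraph r n ω) ε} := by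
    intro n hn
    have hsub : (Set.univ : Set (Sym2 (MV r n) → Bool)) ⊆
        {ω | ¬ KrTilingCovers r n (sampleGraph r n ω) ε}
          ∪ {ω | KrTilingCovers r n (sampleGraph r n ω) ε} := by
      intro ω _
      by_cases h : KrTilingCovers r n (sampleGraph r n ω) ε
      · exact Or.inr h
      · exact Or.inl h
    have h1le : (1 : ENNReal)
        ≤ grpMeasure r n (p n) {ω | ¬ KrTilingCovers r n (sampleGraph r n ω) ε}
          + grpMeasure r n (p n) {ω | KrTilingCovers r n (sampleGraph r n ω) ε} := by
      rw [← grp_univ r n (p n) (hp0 n) (hp1 n)]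
      exact le_trans (measure_mono hsub) (measure_union_le _ _)
    have hCle := covers_measure_le r n hr hn ε hε1 (p n) (hp0 n) (hp1 n) (hpc n)
    rw [tsub_le_iff_right]
    calc (1 : ENNReal)
        ≤ grpMeasure r n (p n) {ω | ¬ KrTilingCovers r n (sampleGraph r n ω) ε}
          + grpMeasure r n (p n) {ω | KrTilingCovers r n (sampleGraph r n ω) ε} := h1le
      _ ≤ _ := add_le_add le_rfl hCle
  have hup : ∀ n : ℕ,
      grpMeasure r n (p n) {ω | ¬ KrTilingCovers r n (sampleGraph r n ω) ε} ≤ 1 := by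
    intro n
    rw [← grp_univ r n (p n) (hp0 n) (hp1 n)]
    exact measure_mono (Set.subset_univ _)
  have htend0 : Tendsto (fun n : ℕ => ENNReal.ofReal ((1/2 : ℝ)^n)) atTop (nhds 0) := by
    have hreal : Tendsto (fun n : ℕ => (1/2 : ℝ)^n) atTop (nhds 0) :=
      tendsto_pow_atTop_nhds_zero_of_lt_one (by norm_num) (by norm_num)
    have := (ENNReal.continuous_ofReal.tendsto 0).comp hreal
    simpa [Function.comp_def] using this
  have hlow : Tendsto (fun n : ℕ => 1 - ENNReal.ofReal ((1/2 : ℝ)^n)) atTop (nhds 1) := by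
    have := ENNReal.Tendsto.sub (tendsto_const_nhds (x := (1 : ENNReal)) (f := atTop))
      htend0 (Or.inl ENNReal.one_ne_top)
    simpa using this
  refine tendsto_of_tendsto_of_tendsto_of_le_of_le' hlow tendsto_const_nhds ?_ ?_
  · filter_upwards [eventually_ge_atTop 1] with n hn
    exact hbound n hn
  · filter_upwards with n
    exact hup n
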